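/- Let X and Y be finite nonempty sets, θ_ref : X × Y → ℝ, β > 0, and r : X × Y → ℝ. Define the population DPO loss L(θ) = (1/(|X|·|Y|²)) · Σ_{x∈X} Σ_{y,y'∈Y} −σ(r(x,y) − r(x,y'))·log σ(h_θ(x,y,y')), where h_θ(x,y,y') = β·[(θ(x,y) − θ_ref(x,y)) − (θ(x,y') − θ_ref(x,y'))] and σ(u) = 1/(1+exp(−u)). Then θ* := θ_ref + r/β is a global minimizer of L, and every global minimizer θ̂ of L satisfies h_{θ̂}(x,y,y') = r(x,y) − r(x,y') for all x ∈ X and y, y' ∈ Y. -/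

import Mathlib

noncomputable def sigm (u : ℝ) : ℝ := 1 / (1 + Real.exp (-u))

lemma sigm_pos (u : ℝ) : 0 < sigm u := by unfold sigm; positivity

lemma sigm_lt_one (u : ℝ) : sigm u < 1 := by
  unfold sigm
  rw [div_lt_one (by positivity)]
  linarith [Real.exp_pos (-u)]

lemma sigm_neg (u : ℝ) : sigm (-u) = 1 - sigm u := by
  unfold sigm
  rw [neg_neg, Real.exp_neg]
  have h := Real.exp_pos u
  field_simp
  ring

lemma sigm_inj {a b : ℝ} (h : sigm a = sigm b) : a = b := by
  unfold sigm at h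
  have ha : (0:ℝ) < 1 + Real.exp (-a) := by positivity
  have hb : (0:ℝ) < 1 + Real.exp (-b) := by positivity
  field_simp at h
  have h' : Real.exp (-a) = Real.exp (-b) := by linarith
  have := Real.exp_injective h'
  linarith

noncomputable def cterm (d h : ℝ) : ℝ := -sigm d * Real.log (sigm h)

lemma kl_lt {p q : ℝ} (hp0 : 0 < p) (hp1 : p < 1) (hq0 : 0 < q) (hq1 : q < 1)
    (hne : q ≠ p) :
    -p * Real.log p + -(1 - p) * Real.log (1 - p)
      < -p * Real.log q + -(1 - p) * Real.log (1 - q) := by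
  have h1 : Real.log (q / p) < q / p - 1 := by
    apply Real.log_lt_sub_one_of_pos (by positivity)
    intro h; exact hne (by field_simp at h; linarith)
  have h1' : Real.log q - Real.log p < q / p - 1 := by
    rwa [Real.log_div hq0.ne' hp0.ne'] at h1
  have h2 : Real.log (1 - q) - Real.log (1 - p) ≤ (1 - q) / (1 - p) - 1 := by
    have := Real.log_le_sub_one_of_pos (show (0:ℝ) < (1 - q) / (1 - p) by
      apply div_pos <;> linarith)
    rwa [Real.log_div (by linarith) (by linarith)] at this
  have e1 : p * (q / p - 1) = q - p := by
    rw [mul_sub, mul_one, mul_div_cancel₀ q hp0.ne']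
  have e2 : (1 - p) * ((1 - q) / (1 - p) - 1) = p - q := by
    rw [mul_sub, mul_one, mul_div_cancel₀ (1 - q) (by linarith : (1:ℝ) - p ≠ 0)]; ring
  have m1 : p * (Real.log q - Real.log p) < q - p := by
    calc p * (Real.log q - Real.log p) < p * (q / p - 1) :=
          (mul_lt_mul_iff_right₀ hp0).mpr h1'
      _ = q - p := e1
  have m2 : (1 - p) * (Real.log (1 - q) - Real.log (1 - p)) ≤ p - q := by
    calc (1 - p) * (Real.log (1 - q) - Real.log (1 - p))
        ≤ (1 - p) * ((1 - q) / (1 - p) - 1) :=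
          mul_le_mul_of_nonneg_left h2 (by linarith)
      _ = p - q := e2
  nlinarith [m1, m2]

lemma cross_lt (d t : ℝ) (hne : t ≠ d) :
    cterm d d + cterm (-d) (-d) < cterm d t + cterm (-d) (-t) := by
  unfold cterm
  rw [sigm_neg d, sigm_neg t]
  exact kl_lt (sigm_pos d) (sigm_lt_one d) (sigm_pos t) (sigm_lt_one t)
    fun h => hne (sigm_inj h)

lemma cross_le (d t : ℝ) :
    cterm d d + cterm (-d) (-d) ≤ cterm d t + cterm (-d) (-t) := by
  rcases eq_or_ne t d with h | h
  · subst h; exact le_refl _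
  · exact (cross_lt d t h).le

theorem dpo_population_global_minimizers
    {X Y : Type*} [Fintype X] [Nonempty X] [Fintype Y] [Nonempty Y]
    (θref : X × Y → ℝ) (β : ℝ) (hβ : 0 < β) (r : X × Y → ℝ)
    (hmargin : (X × Y → ℝ) → X → Y → Y → ℝ)
    (hh : ∀ θ : X × Y → ℝ, ∀ x y y', hmargin θ x y y' =
      β * ((θ (x, y) - θref (x, y)) - (θ (x, y') - θref (x, y'))))
    (L : (X × Y → ℝ) → ℝ)
    (hL : ∀ θ : X × Y → ℝ, L θ =
      (1 / (Fintype.card X * (Fintype.card Y : ℝ) ^ 2)) *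
        ∑ x, ∑ y, ∑ y',
          -sigm (r (x, y) - r (x, y')) * Real.log (sigm (hmargin θ x y y')))
    (θstar : X × Y → ℝ) (hθstar : θstar = θref + (1 / β) • r) :
    (∀ θ : X × Y → ℝ, L θstar ≤ L θ) ∧
    (∀ θhat : X × Y → ℝ, (∀ θ, L θhat ≤ L θ) →
      ∀ x y y', hmargin θhat x y y' = r (x, y) - r (x, y')) := by
  have hswap : ∀ θ : X × Y → ℝ, ∀ x y y', hmargin θ x y' y = -hmargin θ x y y' := by
    intro θ x y y'; rw [hh, hh]; ring
  have hstar : ∀ x y y', hmargin θstar x y y' = r (x, y) - r (x, y') := by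
    intro x y y'
    rw [hh, hθstar]
    simp only [Pi.add_apply, Pi.smul_apply, smul_eq_mul]
    field_simp
    ring
  set c : ℝ := 1 / (Fintype.card X * (Fintype.card Y : ℝ) ^ 2) with hc
  have hcX : (0:ℝ) < Fintype.card X := by exact_mod_cast Fintype.card_pos
  have hcY : (0:ℝ) < Fintype.card Y := by exact_mod_cast Fintype.card_pos
  have hcpos : 0 < c := by rw [hc]; positivity
  have hLc : ∀ θ : X × Y → ℝ, L θ =
      c * ∑ x, ∑ y, ∑ y', cterm (r (x, y) - r (x, y')) (hmargin θ x y y') := by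
    intro θ; rw [hL θ]; rfl
  -- doubling identity
  have hT2 : ∀ θ : X × Y → ℝ,
      2 * (∑ x, ∑ y, ∑ y', cterm (r (x, y) - r (x, y')) (hmargin θ x y y'))
      = ∑ x, ∑ y, ∑ y', (cterm (r (x, y) - r (x, y')) (hmargin θ x y y')
          + cterm (-(r (x, y) - r (x, y'))) (-(hmargin θ x y y'))) := by
    intro θ
    have h2 : ∀ x : X,
        (∑ y, ∑ y', cterm (-(r (x, y) - r (x, y'))) (-(hmargin θ x y y')))
        = ∑ y, ∑ y', cterm (r (x, y) - r (x, y')) (hmargin θ x y y') := by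
      intro x
      rw [Finset.sum_comm]
      refine Finset.sum_congr rfl fun a _ => Finset.sum_congr rfl fun b _ => ?_
      rw [neg_sub, hswap θ x a b, neg_neg]
    calc 2 * (∑ x, ∑ y, ∑ y', cterm (r (x, y) - r (x, y')) (hmargin θ x y y'))
        = (∑ x, ∑ y, ∑ y', cterm (r (x, y) - r (x, y')) (hmargin θ x y y'))
          + ∑ x, ∑ y, ∑ y', cterm (-(r (x, y) - r (x, y'))) (-(hmargin θ x y y')) := by
          rw [Finset.sum_congr rfl fun x _ => h2 x]; ring
      _ = _ := by simp only [← Finset.sum_add_distrib]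
  -- monotonicity of the raw sum
  have hmono : ∀ θ : X × Y → ℝ,
      (∑ x, ∑ y, ∑ y', cterm (r (x, y) - r (x, y')) (hmargin θstar x y y'))
      ≤ ∑ x, ∑ y, ∑ y', cterm (r (x, y) - r (x, y')) (hmargin θ x y y') := by
    intro θ
    have hp : (∑ x, ∑ y, ∑ y', (cterm (r (x, y) - r (x, y')) (hmargin θstar x y y')
          + cterm (-(r (x, y) - r (x, y'))) (-(hmargin θstar x y y'))))
        ≤ ∑ x, ∑ y, ∑ y', (cterm (r (x, y) - r (x, y')) (hmargin θ x y y')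
          + cterm (-(r (x, y) - r (x, y'))) (-(hmargin θ x y y'))) := by
      refine Finset.sum_le_sum fun x _ => Finset.sum_le_sum fun y _ =>
        Finset.sum_le_sum fun y' _ => ?_
      rw [hstar x y y']
      exact cross_le _ _
    linarith [hT2 θstar, hT2 θ]
  have part1 : ∀ θ : X × Y → ℝ, L θstar ≤ L θ := by
    intro θ
    rw [hLc θstar, hLc θ]
    exact mul_le_mul_of_nonneg_left (hmono θ) hcpos.le
  refine ⟨part1, ?_⟩
  intro θhat hmin x₀ y₀ y₀'
  have heq : (∑ x, ∑ y, ∑ y', cterm (r (x, y) - r (x, y')) (hmargin θhat x y y'))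
      = ∑ x, ∑ y, ∑ y', cterm (r (x, y) - r (x, y')) (hmargin θstar x y y') := by
    have h1 : L θhat ≤ L θstar := hmin θstar
    have h2 : L θstar ≤ L θhat := part1 θhat
    have h3 : L θhat = L θstar := le_antisymm h1 h2
    rw [hLc θhat, hLc θstar] at h3
    exact mul_left_cancel₀ hcpos.ne' h3
  -- turn into a single sum of nonnegative terms
  set G : X × Y × Y → ℝ := fun p =>
    (cterm (r (p.1, p.2.1) - r (p.1, p.2.2)) (hmargin θhat p.1 p.2.1 p.2.2)
      + cterm (-(r (p.1, p.2.1) - r (p.1, p.2.2))) (-(hmargin θhat p.1 p.2.1 p.2.2)))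
    - (cterm (r (p.1, p.2.1) - r (p.1, p.2.2)) (r (p.1, p.2.1) - r (p.1, p.2.2))
      + cterm (-(r (p.1, p.2.1) - r (p.1, p.2.2))) (-(r (p.1, p.2.1) - r (p.1, p.2.2)))) with hG
  have hGnonneg : ∀ p : X × Y × Y, 0 ≤ G p := by
    intro p
    rw [hG]
    have := cross_le (r (p.1, p.2.1) - r (p.1, p.2.2)) (hmargin θhat p.1 p.2.1 p.2.2)
    dsimp only
    linarith
  have hGsum : (∑ p : X × Y × Y, G p) = 0 := by
    have e1 : (∑ p : X × Y × Y, G p)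
        = (∑ x, ∑ y, ∑ y', (cterm (r (x, y) - r (x, y')) (hmargin θhat x y y')
            + cterm (-(r (x, y) - r (x, y'))) (-(hmargin θhat x y y'))))
          - ∑ x, ∑ y, ∑ y', (cterm (r (x, y) - r (x, y')) (r (x, y) - r (x, y'))
            + cterm (-(r (x, y) - r (x, y'))) (-(r (x, y) - r (x, y')))) := by
      rw [hG]
      rw [Finset.sum_sub_distrib]
      congr 1 <;> · rw [Fintype.sum_prod_type]
                    refine Finset.sum_congr rfl fun x _ => ?_
                    rw [Fintype.sum_prod_type]
    have e2 : (∑ x, ∑ y, ∑ y', (cterm (r (x, y) - r (x, y')) (r (x, y) - r (x, y'))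
            + cterm (-(r (x, y) - r (x, y'))) (-(r (x, y) - r (x, y')))))
        = ∑ x, ∑ y, ∑ y', (cterm (r (x, y) - r (x, y')) (hmargin θstar x y y')
            + cterm (-(r (x, y) - r (x, y'))) (-(hmargin θstar x y y'))) := by
      refine Finset.sum_congr rfl fun x _ => Finset.sum_congr rfl fun y _ =>
        Finset.sum_congr rfl fun y' _ => ?_
      rw [hstar x y y']
    rw [e1, e2, ← hT2 θhat, ← hT2 θstar, heq]
    ring
  have hGzero : G (x₀, y₀, y₀') = 0 :=
    (Finset.sum_eq_zero_iff_of_nonneg fun p _ => hGnonneg p).mp hGsum _ (Finset.mem_univ _)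
  by_contra hne
  have hlt := cross_lt (r (x₀, y₀) - r (x₀, y₀')) (hmargin θhat x₀ y₀ y₀') hne
  rw [hG] at hGzero
  dsimp only at hGzero
  linarith
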